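/- arXiv:math/0601020 — 3 statements merged into one kernel-verified Lean document; each statement's English description precedes it below -/
import Mathlib

section
/- Let A be a 3×3 hermitian matrix with quaternion entries, i.e. A = (a_{ij}) with a_{ij} ∈ ℍ and a_{ji} = conj(a_{ij}) for all i,j = 1,2,3 (so the diagonal entries are real). Then both quaternions det₁A := a₁₁a₂₂a₃₃ − a₁₂a₂₁a₃₃ − a₁₃a₂₂a₃₁ − a₁₁a₂₃a₃₂ + a₁₃(a₃₂a₂₁) + (a₁₂a₂₃)a₃₁ and det₂A := a₁₁a₂₂a₃₃ − a₁₂a₂₁a₃₃ − a₁₃a₂₂a₃₁ − a₁₁a₂₃a₃₂ + a₃₁(a₂₃a₁₂) + (a₂₁a₃₂)a₁₃ are real, i.e. they lie in the copy of ℝ inside the quaternions ℍ. -/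
open scoped Quaternion

/-- The first real-valued Weierstrass determinant of a 3×3 hermitian quaternion matrix. -/
noncomputable def det1 (a : Fin 3 → Fin 3 → ℍ[ℝ]) : ℍ[ℝ] :=
  a 0 0 * a 1 1 * a 2 2 - a 0 1 * a 1 0 * a 2 2 - a 0 2 * a 1 1 * a 2 0
    - a 0 0 * a 1 2 * a 2 1 + a 0 2 * (a 2 1 * a 1 0) + (a 0 1 * a 1 2) * a 2 0

/-- The second real-valued Weierstrass determinant of a 3×3 hermitian quaternion matrix. -/
noncomputable def det2 (a : Fin 3 → Fin 3 → ℍ[ℝ]) : ℍ[ℝ] :=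
  a 0 0 * a 1 1 * a 2 2 - a 0 1 * a 1 0 * a 2 2 - a 0 2 * a 1 1 * a 2 0
    - a 0 0 * a 1 2 * a 2 1 + a 2 0 * (a 1 2 * a 0 1) + (a 1 0 * a 2 1) * a 0 2

open Quaternion in
/-- A quaternion fixed by conjugation is real. -/
lemma real_of_star (q : ℍ[ℝ]) (h : q = star q) : q = ((q.re : ℝ) : ℍ[ℝ]) := by
  ext
  · simp
  · have := congrArg QuaternionAlgebra.imI h; simp at this ⊢; linarith
  · have := congrArg QuaternionAlgebra.imJ h; simp at this ⊢; linarith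
  · have := congrArg QuaternionAlgebra.imK h; simp at this ⊢; linarith

open Quaternion in
lemma key' (t1 t2 t3 t4 e f : ℍ[ℝ]) (h1 : ∃ r : ℝ, t1 = r) (h2 : ∃ r : ℝ, t2 = r)
    (h3 : ∃ r : ℝ, t3 = r) (h4 : ∃ r : ℝ, t4 = r) (hef : f = star e) :
    ∃ r : ℝ, t1 - t2 - t3 - t4 + e + f = (r : ℍ[ℝ]) := by
  obtain ⟨r1, rfl⟩ := h1; obtain ⟨r2, rfl⟩ := h2; obtain ⟨r3, rfl⟩ := h3; obtain ⟨r4, rfl⟩ := h4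
  refine ⟨r1 - r2 - r3 - r4 + 2 * e.re, ?_⟩
  rw [add_assoc, hef, self_add_star']
  norm_cast

open Quaternion in
/-- For a 3×3 hermitian quaternion matrix, both `det1` and `det2` are real, i.e. lie in
the canonical copy of ℝ inside ℍ. -/
theorem statement0 (a : Fin 3 → Fin 3 → ℍ[ℝ])
    (ha : ∀ i j, a j i = star (a i j)) :
    (∃ r : ℝ, det1 a = (r : ℍ[ℝ])) ∧ (∃ r : ℝ, det2 a = (r : ℍ[ℝ])) := by
  have e0 : a 0 0 = (((a 0 0).re : ℝ) : ℍ[ℝ]) := real_of_star _ (ha 0 0)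
  have e1 : a 1 1 = (((a 1 1).re : ℝ) : ℍ[ℝ]) := real_of_star _ (ha 1 1)
  have e2 : a 2 2 = (((a 2 2).re : ℝ) : ℍ[ℝ]) := real_of_star _ (ha 2 2)
  set x := (a 0 0).re; set y := (a 1 1).re; set z := (a 2 2).re
  set b := a 0 1 with hb; set c := a 0 2 with hc; set d := a 1 2 with hd
  have f10 : a 1 0 = star b := ha 0 1
  have f20 : a 2 0 = star c := ha 0 2
  have f21 : a 2 1 = star d := ha 1 2
  have ht1 : ∃ r : ℝ, (x:ℍ[ℝ]) * y * z = (r : ℍ[ℝ]) := ⟨x*y*z, by push_cast; ring_nf⟩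
  have ht2 : ∃ r : ℝ, b * star b * (z:ℍ[ℝ]) = (r : ℍ[ℝ]) :=
    ⟨normSq b * z, by rw [self_mul_star]; push_cast; ring_nf⟩
  have ht3 : ∃ r : ℝ, c * (y:ℍ[ℝ]) * star c = (r : ℍ[ℝ]) :=
    ⟨y * normSq c, by
      rw [← (Quaternion.coe_commute y c).eq, mul_assoc, self_mul_star]; push_cast; ring_nf⟩
  have ht4 : ∃ r : ℝ, (x:ℍ[ℝ]) * d * star d = (r : ℍ[ℝ]) :=
    ⟨x * normSq d, by rw [mul_assoc, self_mul_star]; push_cast; ring_nf⟩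
  constructor
  · have : det1 a = (x:ℍ[ℝ]) * y * z - b * star b * z - c * (y:ℍ[ℝ]) * star c
        - (x:ℍ[ℝ]) * d * star d + c * (star d * star b) + (b * d) * star c := by
      rw [det1, e0, e1, e2, f10, f20, f21]
    rw [this]
    exact key' _ _ _ _ _ _ ht1 ht2 ht3 ht4 (by simp [star_mul, mul_assoc])
  · have : det2 a = (x:ℍ[ℝ]) * y * z - b * star b * z - c * (y:ℍ[ℝ]) * star c
        - (x:ℍ[ℝ]) * d * star d + star c * (d * b) + (star b * star d) * c := by
      rw [det2, e0, e1, e2, f10, f20, f21]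
    rw [this]
    exact key' _ _ _ _ _ _ ht1 ht2 ht3 ht4 (by simp [star_mul, mul_assoc])
end

section
/- For x = (x¹,…,x⁵) ∈ ℝ⁵ let A(x) be the real symmetric trace-free 3×3 matrix A(x) = [[x⁵ − √3·x⁴, √3·x³, √3·x²], [√3·x³, x⁵ + √3·x⁴, √3·x¹], [√3·x², √3·x¹, −2x⁵]], and let Υ_{IJK} (I,J,K = 1,…,5) be the totally symmetric tensor defined by Υ_{IJK} x^I x^J x^K = (1/2)·det A(x). Then Υ satisfies: (i) Υ_{IJK} = Υ_{(IJK)}; (ii) Σ_J Υ_{IJJ} = 0 for all I; (iii) Σ_I (Υ_{JKI}Υ_{LMI} + Υ_{LJI}Υ_{KMI} + Υ_{KLI}Υ_{JMI}) = δ_{JK}δ_{LM} + δ_{LJ}δ_{KM} + δ_{KL}δ_{JM} for all J,K,L,M. -/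
set_option maxHeartbeats 1000000

open Matrix

/-- The generic real symmetric trace-free 3×3 matrix parametrized by `x ∈ ℝ⁵`
(indices: `x 0 = x¹, …, x 4 = x⁵`). -/
noncomputable def A5 (x : Fin 5 → ℝ) : Matrix (Fin 3) (Fin 3) ℝ :=
  !![x 4 - Real.sqrt 3 * x 3, Real.sqrt 3 * x 2, Real.sqrt 3 * x 1;
     Real.sqrt 3 * x 2, x 4 + Real.sqrt 3 * x 3, Real.sqrt 3 * x 0;
     Real.sqrt 3 * x 1, Real.sqrt 3 * x 0, -2 * x 4]

def cza : Fin 5 → Fin 5 → Fin 5 → ℤ :=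
  ![
   ![
    ![0, 0, 0, 0, -1],
    ![0, 0, 0, 0, 0],
    ![0, 0, 0, 0, 0],
    ![0, 0, 0, 0, 0],
    ![-1, 0, 0, 0, 0]],
   ![
    ![0, 0, 0, 0, 0],
    ![0, 0, 0, 0, -1],
    ![0, 0, 0, 0, 0],
    ![0, 0, 0, 0, 0],
    ![0, -1, 0, 0, 0]],
   ![
    ![0, 0, 0, 0, 0],
    ![0, 0, 0, 0, 0],
    ![0, 0, 0, 0, 2],
    ![0, 0, 0, 0, 0],
    ![0, 0, 2, 0, 0]],
   ![
    ![0, 0, 0, 0, 0],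
    ![0, 0, 0, 0, 0],
    ![0, 0, 0, 0, 0],
    ![0, 0, 0, 0, 2],
    ![0, 0, 0, 2, 0]],
   ![
    ![-1, 0, 0, 0, 0],
    ![0, -1, 0, 0, 0],
    ![0, 0, 2, 0, 0],
    ![0, 0, 0, 2, 0],
    ![0, 0, 0, 0, -2]]]

def czb : Fin 5 → Fin 5 → Fin 5 → ℤ :=
  ![
   ![
    ![0, 0, 0, 1, 0],
    ![0, 0, 1, 0, 0],
    ![0, 1, 0, 0, 0],
    ![1, 0, 0, 0, 0],
    ![0, 0, 0, 0, 0]],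
   ![
    ![0, 0, 1, 0, 0],
    ![0, 0, 0, -1, 0],
    ![1, 0, 0, 0, 0],
    ![0, -1, 0, 0, 0],
    ![0, 0, 0, 0, 0]],
   ![
    ![0, 1, 0, 0, 0],
    ![1, 0, 0, 0, 0],
    ![0, 0, 0, 0, 0],
    ![0, 0, 0, 0, 0],
    ![0, 0, 0, 0, 0]],
   ![
    ![1, 0, 0, 0, 0],
    ![0, -1, 0, 0, 0],
    ![0, 0, 0, 0, 0],
    ![0, 0, 0, 0, 0],
    ![0, 0, 0, 0, 0]],
   ![
    ![0, 0, 0, 0, 0],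
    ![0, 0, 0, 0, 0],
    ![0, 0, 0, 0, 0],
    ![0, 0, 0, 0, 0],
    ![0, 0, 0, 0, 0]]]

/-- The explicit ternary-form tensor: `cT i j k = (cza i j k + czb i j k * √3) / 2`. -/
noncomputable def cT : Fin 5 → Fin 5 → Fin 5 → ℝ := fun i j k =>
  ((cza i j k : ℝ) + (czb i j k : ℝ) * Real.sqrt 3) / 2

lemma cza_sym1 : ∀ I J K, cza I J K = cza J I K := by decide
lemma cza_sym2 : ∀ I J K, cza I J K = cza I K J := by decide
lemma czb_sym1 : ∀ I J K, czb I J K = czb J I K := by decide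
lemma czb_sym2 : ∀ I J K, czb I J K = czb I K J := by decide

lemma cT_sym1 : ∀ I J K, cT I J K = cT J I K := by
  intro I J K; unfold cT; rw [cza_sym1 I J K, czb_sym1 I J K]

lemma cT_sym2 : ∀ I J K, cT I J K = cT I K J := by
  intro I J K; unfold cT; rw [cza_sym2 I J K, czb_sym2 I J K]

lemma hTa : ∀ I : Fin 5, (∑ J, cza I J J) = 0 := by decide
lemma hTb : ∀ I : Fin 5, (∑ J, czb I J J) = 0 := by decide

lemma hP : ∀ J K L M : Fin 5,
    (∑ I, (cza J K I * cza L M I + 3 * czb J K I * czb L M I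
         + cza L J I * cza K M I + 3 * czb L J I * czb K M I
         + cza K L I * cza J M I + 3 * czb K L I * czb J M I)) =
    4 * ((if J = K then (1:ℤ) else 0) * (if L = M then (1:ℤ) else 0)
      + (if L = J then (1:ℤ) else 0) * (if K = M then (1:ℤ) else 0)
      + (if K = L then (1:ℤ) else 0) * (if J = M then (1:ℤ) else 0)) := by decide

lemma hQ : ∀ J K L M : Fin 5,
    (∑ I, (cza J K I * czb L M I + czb J K I * cza L M I
         + cza L J I * czb K M I + czb L J I * cza K M I
         + cza K L I * czb J M I + czb K L I * cza J M I)) = 0 := by decide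

lemma cT_det (x : Fin 5 → ℝ) :
    (∑ I, ∑ J, ∑ K, cT I J K * x I * x J * x K) = (1 / 2) * (A5 x).det := by
  have h2 : Real.sqrt 3 ^ 2 = 3 := Real.sq_sqrt (by norm_num)
  have h3 : Real.sqrt 3 ^ 3 = 3 * Real.sqrt 3 := by rw [pow_succ, h2]
  simp only [Fin.sum_univ_five, cT, cza, czb, A5, Matrix.det_fin_three, Matrix.cons_val_zero,
    Matrix.cons_val_one, Matrix.head_cons, Matrix.cons_val_two, Matrix.cons_val_three,
    Matrix.cons_val_four, Matrix.tail_cons, Matrix.head_fin_const, Matrix.of_apply, Matrix.cons_val',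
    Matrix.empty_val', Matrix.cons_val_fin_one, Matrix.head_val']
  push_cast
  ring_nf
  simp only [h2, h3]
  ring

noncomputable def TT (D : Fin 5 → Fin 5 → Fin 5 → ℝ) (x y z : Fin 5 → ℝ) : ℝ :=
  ∑ a, ∑ b, ∑ c, D a b c * x a * y b * z c

lemma TT_add1 (D : Fin 5 → Fin 5 → Fin 5 → ℝ) (x x' y z : Fin 5 → ℝ) :
    TT D (x + x') y z = TT D x y z + TT D x' y z := by
  simp only [TT, Pi.add_apply, mul_add, add_mul, Finset.sum_add_distrib]

lemma TT_add2 (D : Fin 5 → Fin 5 → Fin 5 → ℝ) (x y y' z : Fin 5 → ℝ) :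
    TT D x (y + y') z = TT D x y z + TT D x y' z := by
  simp only [TT, Pi.add_apply, mul_add, add_mul, Finset.sum_add_distrib]

lemma TT_add3 (D : Fin 5 → Fin 5 → Fin 5 → ℝ) (x y z z' : Fin 5 → ℝ) :
    TT D x y (z + z') = TT D x y z + TT D x y z' := by
  simp only [TT, Pi.add_apply, mul_add, add_mul, Finset.sum_add_distrib]

lemma TT_sym12 (D : Fin 5 → Fin 5 → Fin 5 → ℝ)
    (h1 : ∀ I J K, D I J K = D J I K) (x y z : Fin 5 → ℝ) :
    TT D x y z = TT D y x z := by
  unfold TT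
  rw [Finset.sum_comm]
  refine Finset.sum_congr rfl fun b _ => Finset.sum_congr rfl fun a _ =>
    Finset.sum_congr rfl fun c _ => ?_
  rw [h1 a b c]; ring

lemma TT_sym23 (D : Fin 5 → Fin 5 → Fin 5 → ℝ)
    (h2 : ∀ I J K, D I J K = D I K J) (x y z : Fin 5 → ℝ) :
    TT D x y z = TT D x z y := by
  unfold TT
  refine Finset.sum_congr rfl fun a _ => ?_
  rw [Finset.sum_comm]
  refine Finset.sum_congr rfl fun c _ => Finset.sum_congr rfl fun b _ => ?_
  rw [h2 a b c]; ring

def ee (i : Fin 5) : Fin 5 → ℝ := fun a => if a = i then 1 else 0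

lemma TT_basis (D : Fin 5 → Fin 5 → Fin 5 → ℝ) (I J K : Fin 5) :
    TT D (ee I) (ee J) (ee K) = D I J K := by
  simp [TT, ee, mul_ite, ite_mul, mul_one, mul_zero, zero_mul, one_mul,
    Finset.sum_ite_eq', Finset.mem_univ]

lemma cubic_zero (D : Fin 5 → Fin 5 → Fin 5 → ℝ)
    (h1 : ∀ I J K, D I J K = D J I K) (h2 : ∀ I J K, D I J K = D I K J)
    (hF : ∀ x : Fin 5 → ℝ, (∑ I, ∑ J, ∑ K, D I J K * x I * x J * x K) = 0) :
    ∀ I J K, D I J K = 0 := by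
  have hF' : ∀ x, TT D x x x = 0 := hF
  intro I J K
  set x := ee I; set y := ee J; set z := ee K
  have E1 := hF' (x + y + z)
  have E2 := hF' (x + y)
  have E3 := hF' (x + z)
  have E4 := hF' (y + z)
  have E5 := hF' x
  have E6 := hF' y
  have E7 := hF' z
  simp only [TT_add1, TT_add2, TT_add3] at E1 E2 E3 E4
  have s1 := TT_sym23 D h2 x y z
  have s2 := TT_sym12 D h1 x y z
  have s3 := TT_sym23 D h2 y x z
  have s4 := TT_sym12 D h1 x z y
  have s5 := TT_sym23 D h2 z x y
  rw [← TT_basis D I J K]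
  show TT D x y z = 0
  linear_combination (E1 - E2 - E3 - E4 + E5 + E6 + E7 + 3*s1 + 2*s2 + s3 + 2*s4 + s5)/6

/-- The totally symmetric tensor `Υ` on `ℝ⁵` with `Υ_{IJK}x^Ix^Jx^K = ½ det A(x)`
satisfies total symmetry (i), trace-freeness (ii), and the quadratic identity (iii). -/
theorem statement2 (Υ : Fin 5 → Fin 5 → Fin 5 → ℝ)
    (hsym1 : ∀ I J K, Υ I J K = Υ J I K)
    (hsym2 : ∀ I J K, Υ I J K = Υ I K J)
    (hdef : ∀ x : Fin 5 → ℝ,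
      (∑ I, ∑ J, ∑ K, Υ I J K * x I * x J * x K) = (1 / 2) * (A5 x).det) :
    ((∀ I J K, Υ I J K = Υ J I K) ∧ (∀ I J K, Υ I J K = Υ I K J)) ∧
    (∀ I, ∑ J, Υ I J J = 0) ∧
    (∀ J K L M, (∑ I, (Υ J K I * Υ L M I + Υ L J I * Υ K M I + Υ K L I * Υ J M I)) =
      (if J = K then (1 : ℝ) else 0) * (if L = M then (1 : ℝ) else 0)
      + (if L = J then (1 : ℝ) else 0) * (if K = M then (1 : ℝ) else 0)
      + (if K = L then (1 : ℝ) else 0) * (if J = M then (1 : ℝ) else 0)) := by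
  have h2 : Real.sqrt 3 ^ 2 = 3 := Real.sq_sqrt (by norm_num)
  -- the difference tensor vanishes
  have hval : ∀ I J K, Υ I J K = cT I J K := by
    have hzero := cubic_zero (fun I J K => Υ I J K - cT I J K)
      (fun I J K => by simp only [hsym1 I J K, cT_sym1 I J K])
      (fun I J K => by simp only [hsym2 I J K, cT_sym2 I J K])
      (fun x => by
        have e1 := hdef x
        have e2 := cT_det x
        calc (∑ I, ∑ J, ∑ K, (Υ I J K - cT I J K) * x I * x J * x K)
            = (∑ I, ∑ J, ∑ K, Υ I J K * x I * x J * x K)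
              - (∑ I, ∑ J, ∑ K, cT I J K * x I * x J * x K) := by
              simp only [sub_mul, Finset.sum_sub_distrib]
          _ = 0 := by rw [e1, e2, sub_self])
    intro I J K
    have h := hzero I J K
    exact sub_eq_zero.mp h
  refine ⟨⟨hsym1, hsym2⟩, ?_, ?_⟩
  · -- trace-freeness
    intro I
    have Ea := hTa I
    have Eb := hTb I
    rw [Fin.sum_univ_five] at Ea Eb ⊢
    simp only [hval, cT]
    have Ea' : ((cza I 0 0 : ℝ) + cza I 1 1 + cza I 2 2 + cza I 3 3 + cza I 4 4) = 0 := by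
      exact_mod_cast Ea
    have Eb' : ((czb I 0 0 : ℝ) + czb I 1 1 + czb I 2 2 + czb I 3 3 + czb I 4 4) = 0 := by
      exact_mod_cast Eb
    linear_combination Ea' / 2 + (Real.sqrt 3 / 2) * Eb'
  · -- quadratic identity
    intro J K L M
    have Ep := hP J K L M
    have Eq := hQ J K L M
    rw [Fin.sum_univ_five] at Ep Eq ⊢
    simp only [hval, cT]
    have Ep' : ((∑ I : Fin 5, (cza J K I * cza L M I + 3 * czb J K I * czb L M I
         + cza L J I * cza K M I + 3 * czb L J I * czb K M I
         + cza K L I * cza J M I + 3 * czb K L I * czb J M I) : ℤ) : ℝ) =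
        4 * ((if J = K then (1:ℝ) else 0) * (if L = M then (1:ℝ) else 0)
          + (if L = J then (1:ℝ) else 0) * (if K = M then (1:ℝ) else 0)
          + (if K = L then (1:ℝ) else 0) * (if J = M then (1:ℝ) else 0)) := by
      rw [hP J K L M]
      push_cast [apply_ite ((↑·) : ℤ → ℝ)]
      ring
    rw [Fin.sum_univ_five] at Ep'
    have Eq' : ((cza J K 0 : ℝ) * czb L M 0 + czb J K 0 * cza L M 0
         + cza L J 0 * czb K M 0 + czb L J 0 * cza K M 0
         + cza K L 0 * czb J M 0 + czb K L 0 * cza J M 0)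
       + ((cza J K 1 : ℝ) * czb L M 1 + czb J K 1 * cza L M 1
         + cza L J 1 * czb K M 1 + czb L J 1 * cza K M 1
         + cza K L 1 * czb J M 1 + czb K L 1 * cza J M 1)
       + ((cza J K 2 : ℝ) * czb L M 2 + czb J K 2 * cza L M 2
         + cza L J 2 * czb K M 2 + czb L J 2 * cza K M 2
         + cza K L 2 * czb J M 2 + czb K L 2 * cza J M 2)
       + ((cza J K 3 : ℝ) * czb L M 3 + czb J K 3 * cza L M 3
         + cza L J 3 * czb K M 3 + czb L J 3 * cza K M 3
         + cza K L 3 * czb J M 3 + czb K L 3 * cza J M 3)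
       + ((cza J K 4 : ℝ) * czb L M 4 + czb J K 4 * cza L M 4
         + cza L J 4 * czb K M 4 + czb L J 4 * cza K M 4
         + cza K L 4 * czb J M 4 + czb K L 4 * cza J M 4) = 0 := by
      exact_mod_cast Eq
    push_cast at Ep'
    linear_combination Ep' / 4 + (Real.sqrt 3 / 4) * Eq'
      + (((czb J K 0 : ℝ) * (czb L M 0 : ℝ) + (czb L J 0 : ℝ) * (czb K M 0 : ℝ) + (czb K L 0 : ℝ) * (czb J M 0 : ℝ) + (czb J K 1 : ℝ) * (czb L M 1 : ℝ) + (czb L J 1 : ℝ) * (czb K M 1 : ℝ) + (czb K L 1 : ℝ) * (czb J M 1 : ℝ) + (czb J K 2 : ℝ) * (czb L M 2 : ℝ) + (czb L J 2 : ℝ) * (czb K M 2 : ℝ) + (czb K L 2 : ℝ) * (czb J M 2 : ℝ) + (czb J K 3 : ℝ) * (czb L M 3 : ℝ) + (czb L J 3 : ℝ) * (czb K M 3 : ℝ) + (czb K L 3 : ℝ) * (czb J M 3 : ℝ) + (czb J K 4 : ℝ) * (czb L M 4 : ℝ) + (czb L J 4 : ℝ) * (czb K M 4 : ℝ) + (czb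 K L 4 : ℝ) * (czb J M 4 : ℝ)) / 4) * h2
end

section
/- Let Υ_{IJK} be a totally symmetric rank-3 tensor on ℝⁿ, and let Γ_{MJI} be a rank-3 tensor such that for every fixed I, the matrix X^{(I)} with entries X^{(I)}_{MJ} = Γ_{MJI} satisfies the stabilizer identity Σ_M [X^{(I)}_{MJ}Υ_{MKL} + X^{(I)}_{MK}Υ_{JML} + X^{(I)}_{ML}Υ_{JKM}] = 0 for all J,K,L (i.e. each X^{(I)} lies in the annihilator Lie algebra of Υ). Then Υ'(Γ) = 0, where Υ'(Γ)_{IJKL} = 12·Γ_{M(JI}Υ_{KL)M} is the total symmetrization over I,J,K,L of Γ_{M(JI}Υ_{KL)M}. -/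
/-- If, for every fixed third index `I`, the matrix `X^{(I)}_{MJ} = Γ_{MJI}` lies in the
stabilizer Lie algebra of the totally symmetric tensor `Υ`, then
`Υ'(Γ)_{IJKL} = 12·Γ_{M(JI}Υ_{KL)M}` vanishes, i.e. `𝔥⊗ℝⁿ ⊆ ker Υ'`. -/
theorem statement13 (n : ℕ) (Υ Γ : Fin n → Fin n → Fin n → ℝ)
    (hsym1 : ∀ I J K, Υ I J K = Υ J I K)
    (hsym2 : ∀ I J K, Υ I J K = Υ I K J)
    (hstab : ∀ I J K L,
      (∑ M, (Γ M J I * Υ M K L + Γ M K I * Υ J M L + Γ M L I * Υ J K M)) = 0) :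
    ∀ I J K L,
      (∑ M, (Γ M J I * Υ M K L + Γ M K I * Υ J M L + Γ M L I * Υ J K M
           + Γ M I J * Υ M K L + Γ M K J * Υ I M L + Γ M L J * Υ I K M
           + Γ M I K * Υ M J L + Γ M J K * Υ I M L + Γ M L K * Υ I J M
           + Γ M I L * Υ M J K + Γ M J L * Υ I M K + Γ M K L * Υ I J M)) = 0 := by
  intro I J K L
  have h1 := hstab I J K L
  have h2 := hstab J I K L
  have h3 := hstab K I J L
  have h4 := hstab L I J K
  have hsplit :
      (∑ M, (Γ M J I * Υ M K L + Γ M K I * Υ J M L + Γ M L I * Υ J K M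
           + Γ M I J * Υ M K L + Γ M K J * Υ I M L + Γ M L J * Υ I K M
           + Γ M I K * Υ M J L + Γ M J K * Υ I M L + Γ M L K * Υ I J M
           + Γ M I L * Υ M J K + Γ M J L * Υ I M K + Γ M K L * Υ I J M)) =
      (∑ M, (Γ M J I * Υ M K L + Γ M K I * Υ J M L + Γ M L I * Υ J K M))
      + (∑ M, (Γ M I J * Υ M K L + Γ M K J * Υ I M L + Γ M L J * Υ I K M))
      + (∑ M, (Γ M I K * Υ M J L + Γ M J K * Υ I M L + Γ M L K * Υ I J M))
      + (∑ M, (Γ M I L * Υ M J K + Γ M J L * Υ I M K + Γ M K L * Υ I J M)) := by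
    rw [← Finset.sum_add_distrib, ← Finset.sum_add_distrib, ← Finset.sum_add_distrib]
    exact Finset.sum_congr rfl fun M _ => by ring
  rw [hsplit, h1, h2, h3, h4]; ring
end
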